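/- arXiv:0903.1381 — 7 statements merged into one kernel-verified Lean document; each statement's English description precedes it below -/
import Mathlib

section
/- Let (Γ, Γ') be a pair of dual graded graphs on a common vertex set V with height function h, unique vertex v₀ of height 0, and edge-multiplicity functions m, m' : V × V → ℕ, with differential coefficient r ∈ ℕ (i.e. D_{Γ'}∘U_Γ − U_Γ∘D_{Γ'} = r·Id on the free ℤ-module ℤV). Then for every n ≥ 0, the sum over all vertices v of height n of f^v_Γ · f^v_{Γ'} equals rⁿ · n!, where f^v_Γ (resp. f^v_{Γ'}) denotes the number of paths from v₀ to v in Γ (resp. Γ') counted with edge multiplicities. -/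
/-- Fomin's path-counting theorem for dual graded graphs: if `(Γ, Γ')` is a pair of
dual graded graphs with differential coefficient `r`, then the sum over vertices `v`
of height `n` of `f^v_Γ · f^v_{Γ'}` equals `rⁿ · n!`. -/
theorem stmt_0 {V : Type*} [DecidableEq V] (h : V → ℕ) (v₀ : V) (m m' : V → V → ℕ) (r : ℕ)
    -- each fiber of the height function is finite
    (hfib : ∀ n : ℕ, {v : V | h v = n}.Finite)
    -- `v₀` is the unique vertex of height `0`
    (hv₀ : h v₀ = 0) (huniq : ∀ v : V, h v = 0 → v = v₀)
    -- edges go up exactly one level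
    (hm : ∀ v u : V, m v u ≠ 0 → h u = h v + 1)
    (hm' : ∀ v u : V, m' v u ≠ 0 → h u = h v + 1)
    -- duality with differential coefficient `r`:
    -- `D_{Γ'} ∘ U_Γ - U_Γ ∘ D_{Γ'} = r · Id`, written entrywise
    (hdual : ∀ u v : V, h u = h v →
      (∑ᶠ w : V, m v w * m' u w) = (∑ᶠ w : V, m' w v * m w u) + (if u = v then r else 0))
    -- `f` and `f'` count paths from `v₀` in `Γ` and `Γ'` respectively
    (f f' : V → ℕ)
    (hf₀ : f v₀ = 1) (hf : ∀ u : V, 1 ≤ h u → f u = ∑ᶠ v : V, m v u * f v)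
    (hf'₀ : f' v₀ = 1) (hf' : ∀ u : V, 1 ≤ h u → f' u = ∑ᶠ v : V, m' v u * f' v)
    (n : ℕ) :
    ∑ v ∈ (hfib n).toFinset, f v * f' v = r ^ n * n.factorial := by
  classical
  set s : ℕ → Finset V := fun k => (hfib k).toFinset with hs
  have hmem : ∀ k v, v ∈ s k ↔ h v = k := by
    intro k v; simp [hs]
  have key : ∀ (F : V → ℕ) (k : ℕ), (∀ w, F w ≠ 0 → h w = k) →
      ∑ᶠ w, F w = ∑ w ∈ s k, F w := by
    intro F k hF
    refine finsum_eq_sum_of_support_subset F ?_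
    intro w hw
    exact (hmem k w).2 (hF w hw)
  have hs0 : s 0 = {v₀} := by
    ext v
    simp only [hmem, Finset.mem_singleton]
    exact ⟨fun hv => huniq v hv, fun hv => hv ▸ hv₀⟩
  have hf_fin : ∀ (k : ℕ) (u : V), h u = k + 1 → f u = ∑ v ∈ s k, m v u * f v := by
    intro k u hu
    rw [hf u (by omega)]
    refine key _ k fun v hv => ?_
    have h0 : m v u ≠ 0 := fun h0 => hv (by simp [h0])
    have := hm v u h0; omega
  have hf'_fin : ∀ (k : ℕ) (u : V), h u = k + 1 → f' u = ∑ v ∈ s k, m' v u * f' v := by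
    intro k u hu
    rw [hf' u (by omega)]
    refine key _ k fun v hv => ?_
    have h0 : m' v u ≠ 0 := fun h0 => hv (by simp [h0])
    have := hm' v u h0; omega
  have hdual_fin : ∀ (k : ℕ) (u v : V), h u = k → h v = k →
      ∑ w ∈ s (k + 1), m v w * m' u w
        = (∑ᶠ w, m' w v * m w u) + (if u = v then r else 0) := by
    intro k u v hu hv
    rw [← hdual u v (by omega)]
    refine (key _ (k + 1) fun w hw => ?_).symm
    have h0 : m v w ≠ 0 := fun h0 => hw (by simp [h0])
    have := hm v w h0; omega
  -- the key claim
  have claim : ∀ k (u : V), h u = k →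
      ∑ w ∈ s (k + 1), m' u w * f w = r * (k + 1) * f u := by
    intro k
    induction k with
    | zero =>
      intro u hu
      have hu0 : u = v₀ := huniq u hu
      have step1 : ∑ w ∈ s 1, m' u w * f w
          = ∑ v ∈ s 0, f v * ∑ w ∈ s 1, m v w * m' u w := by
        calc ∑ w ∈ s 1, m' u w * f w
            = ∑ w ∈ s 1, ∑ v ∈ s 0, f v * (m v w * m' u w) := by
              refine Finset.sum_congr rfl fun w hw => ?_
              rw [hf_fin 0 w ((hmem (0 + 1) w).1 hw), Finset.mul_sum]
              exact Finset.sum_congr rfl fun v _ => by ring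
          _ = ∑ v ∈ s 0, ∑ w ∈ s 1, f v * (m v w * m' u w) := Finset.sum_comm
          _ = ∑ v ∈ s 0, f v * ∑ w ∈ s 1, m v w * m' u w := by
              exact Finset.sum_congr rfl fun v _ => by rw [Finset.mul_sum]
      rw [step1]
      have step2 : ∀ v ∈ s 0, f v * ∑ w ∈ s 1, m v w * m' u w
          = f v * (if u = v then r else 0) := by
        intro v hv
        rw [hdual_fin 0 u v hu ((hmem 0 v).1 hv)]
        have hz : (∑ᶠ w, m' w v * m w u) = 0 := by
          refine finsum_eq_zero_of_forall_eq_zero fun w => ?_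
          have : m' w v = 0 := by
            by_contra h0
            have := hm' w v h0
            have := (hmem 0 v).1 hv
            omega
          simp [this]
        rw [hz, zero_add]
      rw [Finset.sum_congr rfl step2, hs0]
      simp [hu0, hf₀]
    | succ k ih =>
      intro u hu
      have step1 : ∑ w ∈ s (k + 2), m' u w * f w
          = ∑ v ∈ s (k + 1), f v * ∑ w ∈ s (k + 2), m v w * m' u w := by
        calc ∑ w ∈ s (k + 2), m' u w * f w
            = ∑ w ∈ s (k + 2), ∑ v ∈ s (k + 1), f v * (m v w * m' u w) := by
              refine Finset.sum_congr rfl fun w hw => ?_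
              rw [hf_fin (k + 1) w ((hmem ((k + 1) + 1) w).1 hw), Finset.mul_sum]
              exact Finset.sum_congr rfl fun v _ => by ring
          _ = ∑ v ∈ s (k + 1), ∑ w ∈ s (k + 2), f v * (m v w * m' u w) := Finset.sum_comm
          _ = ∑ v ∈ s (k + 1), f v * ∑ w ∈ s (k + 2), m v w * m' u w := by
              exact Finset.sum_congr rfl fun v _ => by rw [Finset.mul_sum]
      rw [step1]
      have step2 : ∀ v ∈ s (k + 1), f v * ∑ w ∈ s (k + 2), m v w * m' u w
          = f v * ((∑ w ∈ s k, m' w v * m w u) + (if u = v then r else 0)) := by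
        intro v hv
        rw [hdual_fin (k + 1) u v hu ((hmem (k + 1) v).1 hv)]
        congr 2
        refine key _ k fun w hw => ?_
        have h0 : m' w v ≠ 0 := fun h0 => hw (by simp [h0])
        have := hm' w v h0
        have := (hmem (k + 1) v).1 hv
        omega
      rw [Finset.sum_congr rfl step2]
      simp_rw [Nat.mul_add]
      rw [Finset.sum_add_distrib]
      have hpart1 : ∑ v ∈ s (k + 1), f v * (if u = v then r else 0) = r * f u := by
        have h1 : ∀ v ∈ s (k + 1), f v * (if u = v then r else 0)
            = if u = v then f v * r else 0 := by
          intro v _; split_ifs <;> simp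
        rw [Finset.sum_congr rfl h1, Finset.sum_ite_eq]
        simp [hmem, hu, mul_comm]
      have hpart2 : ∑ v ∈ s (k + 1), f v * ∑ w ∈ s k, m' w v * m w u
          = r * (k + 1) * f u := by
        have swap : ∑ v ∈ s (k + 1), f v * ∑ w ∈ s k, m' w v * m w u
            = ∑ w ∈ s k, m w u * ∑ v ∈ s (k + 1), m' w v * f v := by
          calc ∑ v ∈ s (k + 1), f v * ∑ w ∈ s k, m' w v * m w u
              = ∑ v ∈ s (k + 1), ∑ w ∈ s k, m w u * (m' w v * f v) := by
                refine Finset.sum_congr rfl fun v _ => ?_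
                rw [Finset.mul_sum]
                exact Finset.sum_congr rfl fun w _ => by ring
            _ = ∑ w ∈ s k, ∑ v ∈ s (k + 1), m w u * (m' w v * f v) := Finset.sum_comm
            _ = ∑ w ∈ s k, m w u * ∑ v ∈ s (k + 1), m' w v * f v := by
                exact Finset.sum_congr rfl fun w _ => by rw [Finset.mul_sum]
        rw [swap]
        have : ∀ w ∈ s k, m w u * ∑ v ∈ s (k + 1), m' w v * f v
            = r * (k + 1) * (m w u * f w) := by
          intro w hw
          rw [ih w ((hmem k w).1 hw)]; ring
        rw [Finset.sum_congr rfl this, ← Finset.mul_sum, ← hf_fin k u hu]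
      rw [hpart1, hpart2]
      ring
  -- main induction
  induction n with
  | zero =>
    show ∑ v ∈ s 0, f v * f' v = r ^ 0 * Nat.factorial 0
    rw [hs0]; simp [hf₀, hf'₀]
  | succ n ihn =>
    show ∑ v ∈ s (n + 1), f v * f' v = r ^ (n + 1) * Nat.factorial (n + 1)
    have step1 : ∑ v ∈ s (n + 1), f v * f' v
        = ∑ u ∈ s n, f' u * ∑ v ∈ s (n + 1), m' u v * f v := by
      calc ∑ v ∈ s (n + 1), f v * f' v
          = ∑ v ∈ s (n + 1), ∑ u ∈ s n, f' u * (m' u v * f v) := by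
            refine Finset.sum_congr rfl fun v hv => ?_
            rw [hf'_fin n v ((hmem (n + 1) v).1 hv), Finset.mul_sum]
            exact Finset.sum_congr rfl fun u _ => by ring
        _ = ∑ u ∈ s n, ∑ v ∈ s (n + 1), f' u * (m' u v * f v) := Finset.sum_comm
        _ = ∑ u ∈ s n, f' u * ∑ v ∈ s (n + 1), m' u v * f v := by
            exact Finset.sum_congr rfl fun u _ => by rw [Finset.mul_sum]
    rw [step1]
    have step2 : ∀ u ∈ s n, f' u * ∑ v ∈ s (n + 1), m' u v * f v
        = r * (n + 1) * (f u * f' u) := by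
      intro u hu
      rw [claim n u ((hmem n u).1 hu)]; ring
    rw [Finset.sum_congr rfl step2, ← Finset.mul_sum, ihn]
    rw [Nat.factorial_succ]
    ring
end

section
/- Let R be a commutative ring, let A and B be bialgebras over R, and let p : A × B → R be an R-bilinear pairing satisfying: p(1_A, z) = ε_B(z) and p(x, 1_B) = ε_A(x) for all x ∈ A, z ∈ B; p(x·y, z) = Σ p(x, z⁽¹⁾)·p(y, z⁽²⁾) for all x, y ∈ A, z ∈ B, where Δ_B(z) = Σ z⁽¹⁾ ⊗ z⁽²⁾; and p(x, z·w) = Σ p(x⁽¹⁾, z)·p(x⁽²⁾, w) for all x ∈ A, z, w ∈ B, where Δ_A(x) = Σ x⁽¹⁾ ⊗ x⁽²⁾. Let α ∈ A and β ∈ B be primitive elements, i.e. Δ_A(α) = 1⊗α + α⊗1 and Δ_B(β) = 1⊗β + β⊗1, and assume ε_A(α) = 0 and ε_B(β) = 0. Define R-linear operators on B by U(z) = β·z and D(z) = Σ p(α, z⁽¹⁾)·z⁽²⁾. Then D∘U − U∘D = p(α, β)·Id_B. -/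
open TensorProduct

/-- Hivert–Nzeutchap / Lam–Shimozono, operator form: for dual bialgebras paired by a
bialgebra pairing `p`, primitive elements `α`, `β` give operators `U(z) = β·z` and
`D(z) = Σ p(α,z⁽¹⁾)·z⁽²⁾` satisfying `D∘U − U∘D = p(α,β)·Id`. -/
theorem stmt_2 {R : Type*} [CommRing R]
    {A : Type*} [Ring A] [Bialgebra R A]
    {B : Type*} [Ring B] [Bialgebra R B]
    (p : A →ₗ[R] B →ₗ[R] R)
    (hp1 : ∀ z : B, p 1 z = Coalgebra.counit z)
    (hp1' : ∀ x : A, p x 1 = Coalgebra.counit x)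
    (hpmul : ∀ (x y : A) (z : B),
      p (x * y) z = LinearMap.mul' R R (TensorProduct.map (p x) (p y) (Coalgebra.comul z)))
    (hpcomul : ∀ (x : A) (z w : B),
      p x (z * w) = LinearMap.mul' R R (TensorProduct.map (p.flip z) (p.flip w) (Coalgebra.comul x)))
    (α : A) (β : B)
    (hα : Coalgebra.comul α = 1 ⊗ₜ[R] α + α ⊗ₜ[R] 1)
    (hβ : Coalgebra.comul β = 1 ⊗ₜ[R] β + β ⊗ₜ[R] 1)
    (hεα : Coalgebra.counit α = (0 : R)) (hεβ : Coalgebra.counit β = (0 : R))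
    (U D : B →ₗ[R] B)
    (hU : ∀ z : B, U z = β * z)
    (hD : D = (TensorProduct.lid R B).toLinearMap ∘ₗ
      (TensorProduct.map (p α) LinearMap.id) ∘ₗ Coalgebra.comul) :
    D ∘ₗ U - U ∘ₗ D = p α β • (LinearMap.id : B →ₗ[R] B) := by
  have hpβ : ∀ z : B, p α (β * z) = p α β * Coalgebra.counit z := by
    intro z
    rw [hpcomul α β z, hα]
    simp [hp1, hεβ, mul_comm]
  have key : ∀ c : B ⊗[R] B,
      (TensorProduct.lid R B) ((TensorProduct.map (p α) LinearMap.id)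
        ((1 ⊗ₜ[R] β + β ⊗ₜ[R] 1) * c))
      = β * (TensorProduct.lid R B) ((TensorProduct.map (p α) LinearMap.id) c)
        + p α β • (TensorProduct.lid R B)
            ((TensorProduct.map (Coalgebra.counit) LinearMap.id) c) := by
    intro c
    induction c using TensorProduct.induction_on with
    | zero => simp
    | tmul z1 z2 =>
        simp only [add_mul, Algebra.TensorProduct.tmul_mul_tmul, one_mul, mul_one,
          map_add, TensorProduct.map_tmul, LinearMap.id_coe, id_eq, TensorProduct.lid_tmul]
        rw [hpβ z1]
        rw [mul_smul, smul_comm (p α β), Algebra.mul_smul_comm]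
    | add x y hx hy =>
        simp only [mul_add, map_add, smul_add, hx, hy]
        abel
  ext z
  have hcm : Coalgebra.comul (R := R) (β * z) = Coalgebra.comul β * Coalgebra.comul z :=
    Bialgebra.comul_mul β z
  have hcu : (TensorProduct.lid R B)
      ((TensorProduct.map (Coalgebra.counit) LinearMap.id) (Coalgebra.comul (R := R) z)) = z := by
    have := Coalgebra.rTensor_counit_comul (R := R) z
    simpa [LinearMap.rTensor, this] using congrArg (TensorProduct.lid R B) this
  simp only [LinearMap.sub_apply, LinearMap.comp_apply, LinearMap.smul_apply, LinearMap.id_apply,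
    hD, hU, LinearEquiv.coe_coe]
  rw [hcm, hβ]
  rw [key (Coalgebra.comul z), hcu]
  abel
end

section
/- Let H be a bialgebra over a commutative ring R, let β ∈ H satisfy Δ(β) = 1⊗β + β⊗1 and ε(β) = 0, and let φ : H → R be an R-linear map such that φ(x·y) = φ(x)·ε(y) + ε(x)·φ(y) for all x, y ∈ H. Define R-linear operators on H by U(x) = β·x and D = (φ ⊗ id)∘Δ : H → H. Then D∘U − U∘D = φ(β)·Id_H. -/
open TensorProduct

/-- If `β` is a primitive element of a bialgebra `H` and `φ : H → R` is an `ε`-derivation,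
then the operators `U(x) = β·x` and `D = (φ ⊗ id) ∘ Δ` satisfy `D∘U − U∘D = φ(β)·Id`. -/
theorem stmt_3 {R : Type*} [CommRing R] {H : Type*} [Ring H] [Bialgebra R H]
    (β : H)
    (hβ : Coalgebra.comul β = 1 ⊗ₜ[R] β + β ⊗ₜ[R] 1)
    (hεβ : Coalgebra.counit β = (0 : R))
    (φ : H →ₗ[R] R)
    (hφ : ∀ x y : H, φ (x * y) = φ x * Coalgebra.counit y + Coalgebra.counit x * φ y)
    (U D : H →ₗ[R] H)
    (hU : ∀ x : H, U x = β * x)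
    (hD : D = (TensorProduct.lid R H).toLinearMap ∘ₗ
      (TensorProduct.map φ LinearMap.id) ∘ₗ Coalgebra.comul) :
    D ∘ₗ U - U ∘ₗ D = φ β • (LinearMap.id : H →ₗ[R] H) := by
  have key : ∀ t : H ⊗[R] H,
      (TensorProduct.lid R H) (TensorProduct.map φ LinearMap.id
        ((1 ⊗ₜ[R] β + β ⊗ₜ[R] 1) * t)) =
      β * (TensorProduct.lid R H) (TensorProduct.map φ LinearMap.id t) +
      φ β • (TensorProduct.lid R H)
        (TensorProduct.map Coalgebra.counit LinearMap.id t) := by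
    intro t
    induction t using TensorProduct.induction_on with
    | zero => simp
    | tmul a b =>
        have h1 : φ (β * a) = φ β * Coalgebra.counit a := by
          rw [hφ, hεβ]; ring
        simp only [add_mul, Algebra.TensorProduct.tmul_mul_tmul, one_mul,
          map_add, TensorProduct.map_tmul, LinearMap.id_coe, id_eq,
          TensorProduct.lid_tmul, h1]
        rw [mul_smul_comm, mul_smul]
    | add x y hx hy =>
        simp only [mul_add, map_add, hx, hy, smul_add]
        abel
  ext x
  simp only [LinearMap.sub_apply, LinearMap.comp_apply, LinearMap.smul_apply,
    LinearMap.id_apply, hU, hD, LinearMap.coe_comp, Function.comp_apply,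
    LinearEquiv.coe_coe]
  rw [Bialgebra.comul_mul, hβ, key]
  have hcount : (TensorProduct.lid R H)
      (TensorProduct.map Coalgebra.counit LinearMap.id (Coalgebra.comul x)) = x := by
    have := Coalgebra.rTensor_counit_comul (R := R) x
    rw [LinearMap.rTensor] at this
    rw [this]
    simp
  rw [hcount]
  abel
end

section
/- Let (Γ, Γ') be a pair of quantized dual graded graphs on a common vertex set V with height function h, unique vertex v₀ of height 0, and edge-multiplicity functions m, m' : V × V → ℕ[q], with differential coefficient r ∈ ℤ[q] (i.e. D_{Γ'}∘U_Γ − q·U_Γ∘D_{Γ'} = r·Id on the free ℤ[q]-module ℤ[q]V). Then for every n ≥ 0, the sum over all vertices v of height n of f^v_Γ · f^v_{Γ'} equals rⁿ · [n]! in ℤ[q], where [n]! = [1][2]⋯[n] with [k] = 1 + q + ⋯ + q^{k−1}. -/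
open Polynomial

/-- The `q`-integer `[k] = 1 + q + ⋯ + q^{k−1}` in `ℤ[q]`. -/
noncomputable def qInt (k : ℕ) : Polynomial ℤ := ∑ i ∈ Finset.range k, Polynomial.X ^ i

/-- The `q`-factorial `[n]! = [1][2]⋯[n]` in `ℤ[q]`. -/
noncomputable def qFactorial (n : ℕ) : Polynomial ℤ :=
  ∏ k ∈ Finset.range n, qInt (k + 1)

lemma qInt_succ (k : ℕ) : qInt (k + 1) = 1 + Polynomial.X * qInt k := by
  rw [qInt, Finset.sum_range_succ', qInt, Finset.mul_sum]
  simp [pow_succ, mul_comm, add_comm]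

lemma qInt_one : qInt 1 = 1 := by simp [qInt]

section
variable {V : Type*} (h : V → ℕ)

lemma up_sum (hfib : ∀ n : ℕ, {v : V | h v = n}.Finite)
    (m : V → V → Polynomial ℤ) (hm : ∀ v u : V, m v u ≠ 0 → h u = h v + 1)
    (g : V → Polynomial ℤ) (v : V) :
    ∑ᶠ u, m v u * g u = ∑ u ∈ (hfib (h v + 1)).toFinset, m v u * g u := by
  apply finsum_eq_finset_sum_of_support_subset
  intro u hu
  simp only [Function.mem_support] at hu
  have h0 : m v u ≠ 0 := fun h0 => hu (by simp [h0])
  simpa [Set.Finite.coe_toFinset] using hm v u h0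

lemma down_sum (hfib : ∀ n : ℕ, {v : V | h v = n}.Finite)
    (m : V → V → Polynomial ℤ) (hm : ∀ v u : V, m v u ≠ 0 → h u = h v + 1)
    (g : V → Polynomial ℤ) (v : V) (k : ℕ) (hv : h v = k + 1) :
    ∑ᶠ w, m w v * g w = ∑ w ∈ (hfib k).toFinset, m w v * g w := by
  apply finsum_eq_finset_sum_of_support_subset
  intro w hw
  simp only [Function.mem_support] at hw
  have h0 : m w v ≠ 0 := fun h0 => hw (by simp [h0])
  have := hm w v h0
  simp only [Set.Finite.coe_toFinset, Set.mem_setOf_eq]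
  omega

lemma down_sum' (hfib : ∀ n : ℕ, {v : V | h v = n}.Finite)
    (m : V → V → Polynomial ℤ) (hm : ∀ v u : V, m v u ≠ 0 → h u = h v + 1)
    (g : V → Polynomial ℤ) (v : V) (k : ℕ) (hv : h v = k + 1) :
    ∑ᶠ w, g w * m w v = ∑ w ∈ (hfib k).toFinset, g w * m w v := by
  apply finsum_eq_finset_sum_of_support_subset
  intro w hw
  simp only [Function.mem_support] at hw
  have h0 : m w v ≠ 0 := fun h0 => hw (by simp [h0])
  have := hm w v h0
  simp only [Set.Finite.coe_toFinset, Set.mem_setOf_eq]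
  omega

lemma down_sum_zero (m : V → V → Polynomial ℤ)
    (hm : ∀ v u : V, m v u ≠ 0 → h u = h v + 1)
    (g : V → Polynomial ℤ) (v : V) (hv : h v = 0) :
    ∑ᶠ w, g w * m w v = 0 := by
  apply finsum_eq_zero_of_forall_eq_zero
  intro w
  have : m w v = 0 := by
    by_contra h0
    have := hm w v h0
    omega
  simp [this]

lemma fib_zero (hfib : ∀ n : ℕ, {v : V | h v = n}.Finite) (v₀ : V)
    (hv₀ : h v₀ = 0) (huniq : ∀ v : V, h v = 0 → v = v₀) :
    (hfib 0).toFinset = {v₀} := by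
  ext v
  simp only [Set.Finite.mem_toFinset, Set.mem_setOf_eq, Finset.mem_singleton]
  exact ⟨fun hv => huniq v hv, fun hv => hv ▸ hv₀⟩

variable [DecidableEq V]

lemma keyA (v₀ : V) (m m' : V → V → Polynomial ℤ) (r : Polynomial ℤ)
    (hfib : ∀ n : ℕ, {v : V | h v = n}.Finite)
    (hv₀ : h v₀ = 0) (huniq : ∀ v : V, h v = 0 → v = v₀)
    (hm : ∀ v u : V, m v u ≠ 0 → h u = h v + 1)
    (hm' : ∀ v u : V, m' v u ≠ 0 → h u = h v + 1)
    (hdual : ∀ u v : V, h u = h v →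
      (∑ᶠ w : V, m v w * m' u w) - Polynomial.X * (∑ᶠ w : V, m' w v * m w u) =
        (if u = v then r else 0))
    (f : V → Polynomial ℤ)
    (hf₀ : f v₀ = 1) (hf : ∀ u : V, 1 ≤ h u → f u = ∑ᶠ v : V, m v u * f v) :
    ∀ n : ℕ, ∀ v : V, h v = n → (∑ᶠ u, m' v u * f u) = r * qInt (n + 1) * f v := by
  intro n
  induction n with
  | zero =>
    intro v hv
    have hvv : v = v₀ := huniq v hv
    rw [hvv]
    rw [up_sum h hfib m' hm' f v₀]
    have hfu : ∀ u ∈ (hfib (h v₀ + 1)).toFinset, m' v₀ u * f u = m v₀ u * m' v₀ u := by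
      intro u hu
      simp only [Set.Finite.mem_toFinset, Set.mem_setOf_eq] at hu
      have hfu1 : f u = ∑ᶠ w, m w u * f w := hf u (by omega)
      rw [down_sum h hfib m hm f u 0 (by omega)] at hfu1
      rw [fib_zero h hfib v₀ hv₀ huniq] at hfu1
      simp only [Finset.sum_singleton, hf₀, mul_one] at hfu1
      rw [hfu1]; ring
    rw [Finset.sum_congr rfl hfu]
    have hd := hdual v₀ v₀ rfl
    have hz : (∑ᶠ w : V, m' w v₀ * m w v₀) = 0 :=
      down_sum_zero h m hm (fun w => m' w v₀) v₀ hv₀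
    rw [hz, mul_zero, sub_zero, if_pos rfl] at hd
    rw [up_sum h hfib m hm (fun u => m' v₀ u) v₀] at hd
    rw [hd, hf₀, qInt_one]; ring
  | succ k IH =>
    intro v hv
    rw [up_sum h hfib m' hm' f v, hv]
    have hstep : ∀ u ∈ (hfib (k + 1 + 1)).toFinset,
        m' v u * f u = ∑ w ∈ (hfib (k + 1)).toFinset, f w * (m w u * m' v u) := by
      intro u hu
      simp only [Set.Finite.mem_toFinset, Set.mem_setOf_eq] at hu
      rw [hf u (by omega), down_sum h hfib m hm f u (k + 1) hu, Finset.mul_sum]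
      exact Finset.sum_congr rfl fun w _ => by ring
    rw [Finset.sum_congr rfl hstep, Finset.sum_comm]
    have hinner : ∀ w ∈ (hfib (k + 1)).toFinset,
        (∑ u ∈ (hfib (k + 1 + 1)).toFinset, f w * (m w u * m' v u)) =
        f w * (Polynomial.X * (∑ᶠ t, m' t w * m t v)) + f w * (if v = w then r else 0) := by
      intro w hw
      simp only [Set.Finite.mem_toFinset, Set.mem_setOf_eq] at hw
      rw [← Finset.mul_sum, ← mul_add]
      congr 1
      have hup := up_sum h hfib m hm (fun u => m' v u) w
      rw [hw] at hup
      rw [← hup]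
      have hd := hdual v w (by omega)
      linear_combination hd
    rw [Finset.sum_congr rfl hinner, Finset.sum_add_distrib]
    have hdelta : (∑ w ∈ (hfib (k + 1)).toFinset, f w * (if v = w then r else 0)) = f v * r := by
      rw [Finset.sum_eq_single v]
      · simp
      · intro w _ hwv
        simp [Ne.symm hwv]
      · intro hvnot
        exact absurd (by simp [Set.Finite.mem_toFinset, hv]) hvnot
    rw [hdelta]
    have h1 : ∀ w ∈ (hfib (k + 1)).toFinset,
        f w * (Polynomial.X * (∑ᶠ t, m' t w * m t v)) =
        ∑ t ∈ (hfib k).toFinset, Polynomial.X * (m t v * (m' t w * f w)) := by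
      intro w hw
      rw [down_sum' h hfib m hm (fun t => m' t w) v k hv, Finset.mul_sum, Finset.mul_sum]
      exact Finset.sum_congr rfl fun t _ => by ring
    rw [Finset.sum_congr rfl h1, Finset.sum_comm]
    have h2 : ∀ t ∈ (hfib k).toFinset,
        (∑ w ∈ (hfib (k + 1)).toFinset, Polynomial.X * (m t v * (m' t w * f w))) =
        Polynomial.X * (m t v * (r * qInt (k + 1) * f t)) := by
      intro t ht
      simp only [Set.Finite.mem_toFinset, Set.mem_setOf_eq] at ht
      rw [← Finset.mul_sum, ← Finset.mul_sum]
      have hup := up_sum h hfib m' hm' f t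
      rw [ht] at hup
      rw [← hup, IH t ht]
    rw [Finset.sum_congr rfl h2]
    have h3 : f v = ∑ t ∈ (hfib k).toFinset, m t v * f t := by
      rw [hf v (by omega), down_sum h hfib m hm f v k hv]
    have h4 : (∑ t ∈ (hfib k).toFinset, Polynomial.X * (m t v * (r * qInt (k + 1) * f t))) =
        Polynomial.X * (r * qInt (k + 1)) * ∑ t ∈ (hfib k).toFinset, m t v * f t := by
      rw [Finset.mul_sum]
      exact Finset.sum_congr rfl fun t _ => by ring
    rw [h4, ← h3, qInt_succ (k + 1), qInt_succ k]
    ring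
end

/-- Lam's path-counting theorem for quantized dual graded graphs: if `(Γ, Γ')` is a pair
of quantized dual graded graphs (multiplicities in `ℕ[q] ⊆ ℤ[q]`) with differential
coefficient `r ∈ ℤ[q]`, i.e. `D_{Γ'}∘U_Γ − q·U_Γ∘D_{Γ'} = r·Id`, then the sum over the
vertices `v` of height `n` of `f^v_Γ · f^v_{Γ'}` equals `rⁿ · [n]!`. -/
theorem stmt_5 {V : Type*} [DecidableEq V] (h : V → ℕ) (v₀ : V)
    (m m' : V → V → Polynomial ℤ) (r : Polynomial ℤ)
    -- the multiplicities lie in `ℕ[q]`: all coefficients are nonnegative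
    (hmnat : ∀ v u : V, ∀ i : ℕ, 0 ≤ (m v u).coeff i)
    (hm'nat : ∀ v u : V, ∀ i : ℕ, 0 ≤ (m' v u).coeff i)
    -- each fiber of the height function is finite
    (hfib : ∀ n : ℕ, {v : V | h v = n}.Finite)
    -- `v₀` is the unique vertex of height `0`
    (hv₀ : h v₀ = 0) (huniq : ∀ v : V, h v = 0 → v = v₀)
    -- edges go up exactly one level
    (hm : ∀ v u : V, m v u ≠ 0 → h u = h v + 1)
    (hm' : ∀ v u : V, m' v u ≠ 0 → h u = h v + 1)
    -- quantized duality with differential coefficient `r`: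
    -- `D_{Γ'}∘U_Γ − q·U_Γ∘D_{Γ'} = r·Id`, written entrywise
    (hdual : ∀ u v : V, h u = h v →
      (∑ᶠ w : V, m v w * m' u w) - Polynomial.X * (∑ᶠ w : V, m' w v * m w u) =
        (if u = v then r else 0))
    -- `f` and `f'` count paths (with weights) from `v₀` in `Γ` and `Γ'` respectively
    (f f' : V → Polynomial ℤ)
    (hf₀ : f v₀ = 1) (hf : ∀ u : V, 1 ≤ h u → f u = ∑ᶠ v : V, m v u * f v)
    (hf'₀ : f' v₀ = 1) (hf' : ∀ u : V, 1 ≤ h u → f' u = ∑ᶠ v : V, m' v u * f' v)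
    (n : ℕ) :
    ∑ v ∈ (hfib n).toFinset, f v * f' v = r ^ n * qFactorial n := by
  induction n with
  | zero =>
    rw [fib_zero h hfib v₀ hv₀ huniq]
    simp [qFactorial, hf₀, hf'₀]
  | succ n IH =>
    have hA := keyA h v₀ m m' r hfib hv₀ huniq hm hm' hdual f hf₀ hf
    have hstep : ∀ u ∈ (hfib (n + 1)).toFinset,
        f u * f' u = ∑ v ∈ (hfib n).toFinset, f' v * (m' v u * f u) := by
      intro u hu
      simp only [Set.Finite.mem_toFinset, Set.mem_setOf_eq] at hu
      rw [hf' u (by omega), down_sum h hfib m' hm' f' u n hu, Finset.mul_sum]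
      exact Finset.sum_congr rfl fun v _ => by ring
    rw [Finset.sum_congr rfl hstep, Finset.sum_comm]
    have hinner : ∀ v ∈ (hfib n).toFinset,
        (∑ u ∈ (hfib (n + 1)).toFinset, f' v * (m' v u * f u)) =
        r * qInt (n + 1) * (f v * f' v) := by
      intro v hv
      simp only [Set.Finite.mem_toFinset, Set.mem_setOf_eq] at hv
      rw [← Finset.mul_sum]
      have hup := up_sum h hfib m' hm' f v
      rw [hv] at hup
      rw [← hup, hA n v hv]
      ring
    rw [Finset.sum_congr rfl hinner, ← Finset.mul_sum, IH]
    simp only [qFactorial, Finset.prod_range_succ]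
    ring
end

section
/- Let R be a commutative ring, q, r ∈ R, M an R-module, and U, D : M → M R-linear maps such that D∘U − q·U∘D = r·Id_M. If x ∈ M satisfies D(x) = 0, then for every n ≥ 0 one has Dⁿ(Uⁿ(x)) = rⁿ · [n]!_q · x, where [n]!_q = ∏_{k=1}^{n} (1 + q + ⋯ + q^{k−1}) ∈ R. -/
lemma stmt_6_aux {R : Type*} [CommRing R] (q r : R)
    {M : Type*} [AddCommGroup M] [Module R M]
    (U D : M →ₗ[R] M)
    (hcomm : D ∘ₗ U - q • (U ∘ₗ D) = r • (LinearMap.id : M →ₗ[R] M))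
    (x : M) (hx : D x = 0) (n : ℕ) :
    D ((U ^ (n + 1)) x) = (r * ∑ i ∈ Finset.range (n + 1), q ^ i) • ((U ^ n) x) := by
  have hDU : ∀ y : M, D (U y) = q • U (D y) + r • y := by
    intro y
    have := congrArg (fun f : M →ₗ[R] M => f y) hcomm
    simp only [LinearMap.sub_apply, LinearMap.comp_apply, LinearMap.smul_apply,
      LinearMap.id_apply] at this
    linear_combination (norm := module) this
  induction n with
  | zero =>
    simp [hDU x, hx]
  | succ n ih =>
    have h1 : (U ^ (n + 2)) x = U ((U ^ (n + 1)) x) := by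
      rw [pow_succ']; rfl
    rw [h1, hDU, ih, map_smul]
    have h2 : (U ^ (n + 1)) x = U ((U ^ n) x) := by
      rw [pow_succ']; rfl
    rw [h2, smul_smul, ← add_smul]
    congr 1
    have hs : (∑ i ∈ Finset.range (n + 2), q ^ i)
        = q * ∑ i ∈ Finset.range (n + 1), q ^ i + 1 := by
      rw [Finset.sum_range_succ', Finset.mul_sum]
      simp [pow_succ, mul_comm]
    rw [show n + 1 + 1 = n + 2 from rfl, hs]
    ring

/-- Quantized operator identity: if `D∘U − q·U∘D = r·Id` and `D x = 0`, then
`Dⁿ(Uⁿ(x)) = rⁿ · [n]!_q • x` where `[n]!_q` is the `q`-factorial in `R`. -/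
theorem stmt_6 {R : Type*} [CommRing R] (q r : R)
    {M : Type*} [AddCommGroup M] [Module R M]
    (U D : M →ₗ[R] M)
    (hcomm : D ∘ₗ U - q • (U ∘ₗ D) = r • (LinearMap.id : M →ₗ[R] M))
    (x : M) (hx : D x = 0) (n : ℕ) :
    (D ^ n) ((U ^ n) x) =
      (r ^ n * ∏ k ∈ Finset.range n, (∑ i ∈ Finset.range (k + 1), q ^ i)) • x := by
  induction n with
  | zero => simp
  | succ n ih =>
    have h1 : (D ^ (n + 1)) ((U ^ (n + 1)) x) = (D ^ n) (D ((U ^ (n + 1)) x)) := by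
      rw [pow_succ]; rfl
    rw [h1, stmt_6_aux q r U D hcomm x hx n, map_smul, ih, smul_smul,
      Finset.prod_range_succ]
    congr 1
    ring
end

section
/- Let V be the set of compositions (finite sequences of positive integers, including the empty sequence), with height h(I) = i₁ + ⋯ + i_r for I = (i₁,…,i_r). Define multiplicity functions with values in ℕ[q] as follows. For Γ': m'(I, J) = 1 if J = (1, i₁, …, i_r) or (r ≥ 1 and J = (i₁+1, i₂, …, i_r)), and m'(I,J) = 0 otherwise. For Γ: for I = (i₁,…,i_r) with r ≥ 1 and each 1 ≤ j ≤ r, m(I, (i₁,…,i_{j−1}, i_j+1, i_{j+1},…,i_r)) = q^{i₁+⋯+i_{j−1}} and, for each 0 ≤ k ≤ i_j − 1, m(I, (i₁,…,i_{j−1}, k+1, i_j−k, i_{j+1},…,i_r)) = q^{i₁+⋯+i_{j−1}+k+1}; additionally m(∅, (1)) = 1; all other multiplicities are 0. Then on the free ℤ[q]-module on V, the operators U_Γ(I) = Σ_J m(I,J)·J and D_{Γ'}(I) = Σ_J m'(J,I)·J satisfy D_{Γ'}∘U_Γ − q·U_Γ∘D_{Γ'} = Id, i.e. (Γ, Γ')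 is a pair of quantized dual graded graphs with differential coefficient 1. -/
open Polynomial

/-- Edge multiplicities (in `ℕ[q] ⊆ ℤ[q]`) of the graph `Γ` on compositions
(the `q`-weighted BinWord graph, arising from multiplication by `F₍₁₎` in the quantum
quasi-symmetric functions).  For `I = (i₁,…,i_r)`, the edge from `I` to
`(i₁,…,i_{j−1}, i_j+1, i_{j+1},…,i_r)` has multiplicity `q^{i₁+⋯+i_{j−1}}`, the edge
from `I` to `(i₁,…,i_{j−1}, k+1, i_j−k, i_{j+1},…,i_r)` has multiplicity
`q^{i₁+⋯+i_{j−1}+k+1}` (for `0 ≤ k ≤ i_j−1`; when the two descriptions produce the same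
composition, i.e. when `k = i_j − 1` and `j < r`, the edge is the one described with the
larger `j`), and `m(∅,(1)) = 1`; all other multiplicities are `0`.  This is encoded
recursively on the first part. -/
noncomputable def mGamma : List ℕ+ → List ℕ+ → Polynomial ℤ
  | [], J => if J = [1] then 1 else 0
  | i :: T, J =>
      (if J = (i + 1) :: T then 1 else 0) +
      (∑ p ∈ Finset.Ico (1 : ℕ+) i,
        if J = p :: (i + 1 - p) :: T then (Polynomial.X : Polynomial ℤ) ^ (p : ℕ) else 0) +
      (match J with
        | [] => 0
        | j :: J' =>
            if j = i then (Polynomial.X : Polynomial ℤ) ^ (i : ℕ) * mGamma T J' else 0)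

/-- Edge multiplicities of the lifted binary tree `Γ'` on compositions: the edges from
`I = (i₁,…,i_r)` go to `(1, i₁, …, i_r)` and (if `r ≥ 1`) to `(i₁+1, i₂, …, i_r)`, each
with multiplicity `1`. -/
noncomputable def mGamma' : List ℕ+ → List ℕ+ → Polynomial ℤ :=
  fun I J =>
    (if J = 1 :: I then 1 else 0) +
    (match I with
      | [] => 0
      | i :: T => if J = (i + 1) :: T then 1 else 0)


private lemma pnat_succ_ne_one (k : ℕ+) : k + 1 ≠ 1 := (PNat.lt_add_left 1 k).ne'

private lemma pnat_sub_succ_succ (j k : ℕ+) : j + 1 + 1 - (k + 1) = j + 1 - k := by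
  apply PNat.coe_injective
  rcases lt_or_ge k (j + 1) with h | h
  · rw [PNat.sub_coe, PNat.sub_coe, if_pos h, if_pos ((add_lt_add_iff_right 1).2 h)]
    simp [PNat.add_coe]
  · rw [PNat.sub_coe, PNat.sub_coe, if_neg (not_lt.2 ((add_le_add_iff_right 1).2 h)),
      if_neg (not_lt.2 h)]

private lemma sum_cons_ite (s : Finset ℕ+) (a : ℕ+) (A : List ℕ+) (f : ℕ+ → List ℕ+)
    (c : ℕ+ → Polynomial ℤ) :
    (∑ p ∈ s, if (a :: A : List ℕ+) = p :: f p then c p else 0) =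
      if a ∈ s ∧ A = f a then c a else 0 := by
  by_cases ha : a ∈ s
  · rw [Finset.sum_eq_single_of_mem a ha]
    · simp [ha]
    · intro b _ hb
      rw [if_neg]
      intro h
      injection h with h1 h2
      exact hb h1.symm
  · rw [Finset.sum_eq_zero, if_neg]
    · rintro ⟨h, -⟩; exact ha h
    · intro b hb
      rw [if_neg]
      intro h
      injection h with h1 h2
      exact ha (h1 ▸ hb)

private lemma finsum_one_aux (I K : List ℕ+) :
    (∑ᶠ J : List ℕ+, mGamma I J * mGamma' K J) =
      mGamma I (1 :: K) +
        (match K with | [] => 0 | k :: K' => mGamma I ((k + 1) :: K')) := by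
  cases K with
  | nil =>
      rw [finsum_eq_single _ ((1 : ℕ+) :: ([] : List ℕ+))]
      · simp [mGamma']
      · intro J hJ
        simp [mGamma', hJ]
  | cons k K' =>
      rw [finsum_eq_finset_sum_of_support_subset _
            (s := {(1 : ℕ+) :: k :: K', (k + 1) :: K'}) ?_]
      · rw [Finset.sum_insert (by simp [(pnat_succ_ne_one k).symm]), Finset.sum_singleton]
        simp [mGamma', pnat_succ_ne_one k, (pnat_succ_ne_one k).symm]
      · intro J hJ
        simp only [Function.mem_support, ne_eq] at hJ
        simp only [Finset.coe_insert, Finset.coe_singleton, Set.mem_insert_iff,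
          Set.mem_singleton_iff]
        by_contra h
        push_neg at h
        exact hJ (by simp [mGamma', h.1, h.2])

private lemma finsum_two (I K : List ℕ+) :
    (∑ᶠ J : List ℕ+, mGamma' J I * mGamma J K) =
      (match I with
        | [] => 0
        | i :: T => if i = 1 then mGamma T K else mGamma ((i - 1) :: T) K) := by
  cases I with
  | nil =>
      apply finsum_eq_zero_of_forall_eq_zero
      intro J
      have : mGamma' J [] = 0 := by
        cases J <;> simp [mGamma']
      simp [this]
  | cons i T =>
      rcases eq_or_ne i 1 with rfl | hi
      · rw [finsum_eq_single _ T]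
        · have : mGamma' T ((1 : ℕ+) :: T) = 1 := by
            cases J : T <;> simp [mGamma', J, (pnat_succ_ne_one _).symm]
          simp [this]
        · intro J hJ
          have : mGamma' J ((1 : ℕ+) :: T) = 0 := by
            cases J with
            | nil => simp [mGamma'] at hJ ⊢ <;> tauto
            | cons a T' =>
                simp [mGamma', (pnat_succ_ne_one a).symm]
                intro h; exact absurd h.symm (by simpa using hJ)
          simp [this]
      · obtain ⟨j, rfl⟩ := PNat.exists_eq_succ_of_ne_one hi
        rw [finsum_eq_single _ (j :: T)]
        · have h1 : mGamma' (j :: T) ((j + 1) :: T) = 1 := by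
            simp [mGamma', pnat_succ_ne_one j]
          simp [h1, hi, PNat.add_sub]
        · intro J hJ
          have : mGamma' J ((j + 1) :: T) = 0 := by
            cases J with
            | nil => simp [mGamma', pnat_succ_ne_one j]
            | cons a T' =>
                simp [mGamma', pnat_succ_ne_one j]
                rintro rfl rfl
                exact hJ rfl
          simp [this]

private lemma sum_mg (i : ℕ+) (T : List ℕ+) (a : ℕ+) (A : List ℕ+) :
    (∑ p ∈ Finset.Ico (1 : ℕ+) i,
        if (a :: A : List ℕ+) = p :: (i + 1 - p) :: T then (X : Polynomial ℤ) ^ (p : ℕ) else 0) =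
      if a < i ∧ A = (i + 1 - a) :: T then (X : Polynomial ℤ) ^ (a : ℕ) else 0 := by
  rw [sum_cons_ite (Finset.Ico 1 i) a A (fun p => (i + 1 - p) :: T)
      (fun p => (X : Polynomial ℤ) ^ (p : ℕ))]
  simp [Finset.mem_Ico, PNat.one_le]

private lemma pnat_not_succ_lt (j : ℕ+) : ¬ (j + 1 < j) := not_lt.2 (PNat.lt_add_right j 1).le

private lemma pnat_succ_ne (j : ℕ+) : j + 1 ≠ j := (PNat.lt_add_right j 1).ne'


/-- `(Γ, Γ')` is a pair of quantized dual graded graphs with differential coefficient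
`1`:  on the free `ℤ[q]`-module on the set of compositions, the up operator `U_Γ` of `Γ`
and the down operator `D_{Γ'}` of `Γ'` satisfy `D_{Γ'}∘U_Γ − q·U_Γ∘D_{Γ'} = Id`, written
here entrywise: for all compositions `I, K`, the coefficient of `K` in
`(D_{Γ'}∘U_Γ)(I)` minus `q` times the coefficient of `K` in `(U_Γ∘D_{Γ'})(I)` is `1` if
`K = I` and `0` otherwise. -/

theorem stmt_13 (I K : List ℕ+) :
    (∑ᶠ J : List ℕ+, mGamma I J * mGamma' K J) -
      Polynomial.X * (∑ᶠ J : List ℕ+, mGamma' J I * mGamma J K) =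
      (if K = I then 1 else 0) := by
  rw [finsum_one_aux, finsum_two]
  cases I with
  | nil =>
      cases K with
      | nil => simp [mGamma]
      | cons k K' => simp [mGamma, pnat_succ_ne_one k]
  | cons i T =>
      rcases eq_or_ne i 1 with rfl | hi
      · cases K with
        | nil =>
            simp [mGamma, (pnat_succ_ne_one 1).symm]
        | cons k K' =>
            simp only [mGamma, if_pos rfl, List.cons.injEq]
            have h1 : ((1:ℕ+) :: k :: K' : List ℕ+) ≠ (1 + 1) :: T := by
              simp [(pnat_succ_ne_one 1).symm]
            have h2 : Finset.Ico (1:ℕ+) 1 = ∅ := by simp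
            simp [h1, h2, (pnat_succ_ne_one k), add_left_inj]
            simp [(pnat_succ_ne_one 1).symm]
      · obtain ⟨j, rfl⟩ := PNat.exists_eq_succ_of_ne_one hi
        simp only [if_neg hi, PNat.add_sub]
        cases K with
        | nil =>
            simp [mGamma, (pnat_succ_ne_one (j+1)).symm, (pnat_succ_ne_one j).symm]
        | cons k K' =>
            simp only [mGamma]
            rw [sum_mg, sum_mg, sum_mg]
            have hlt : (1:ℕ+) < j + 1 := PNat.lt_add_left 1 j
            simp only [PNat.add_sub, pnat_sub_succ_succ, hlt, true_and, List.cons.injEq,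
              PNat.one_coe, pow_one, PNat.add_coe, add_left_inj, add_lt_add_iff_right,
              (pnat_succ_ne_one (j+1)).symm, (pnat_succ_ne_one j).symm, if_false,
              false_and, add_zero, zero_add]
            split_ifs with h1 h2 h3 <;>
              first
                | ring
                | exact absurd (h1.1 ▸ h2.1) (pnat_not_succ_lt j)
                | exact absurd (h1.1 ▸ h3) (pnat_succ_ne j)
                | exact absurd (h3 ▸ h2.1) (lt_irrefl j)
end

section
/- Let R be a commutative ring, let B be a bialgebra over R, let β ∈ B satisfy Δ(β) = 1⊗β + β⊗1 and ε(β) = 0, and let φ : B → R be an R-linear map such that φ(x·y) = φ(x)·ε(y) + ε(x)·φ(y) for all x, y ∈ B. Define R-linear operators on B by U(x) = x·β (right multiplication by β) and D = (φ ⊗ id)∘Δ. Then D∘U − U∘D = φ(β)·Id_B. -/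
open TensorProduct

/-- Right-multiplication variant: if `β` is a primitive element of a bialgebra `B` and
`φ : B → R` is an `ε`-derivation, then the operators `U(x) = x·β` and `D = (φ ⊗ id) ∘ Δ`
satisfy `D∘U − U∘D = φ(β)·Id`. -/
theorem stmt_14 {R : Type*} [CommRing R] {B : Type*} [Ring B] [Bialgebra R B]
    (β : B)
    (hβ : Coalgebra.comul β = 1 ⊗ₜ[R] β + β ⊗ₜ[R] 1)
    (hεβ : Coalgebra.counit β = (0 : R))
    (φ : B →ₗ[R] R)
    (hφ : ∀ x y : B, φ (x * y) = φ x * Coalgebra.counit y + Coalgebra.counit x * φ y)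
    (U D : B →ₗ[R] B)
    (hU : ∀ x : B, U x = x * β)
    (hD : D = (TensorProduct.lid R B).toLinearMap ∘ₗ
      (TensorProduct.map φ LinearMap.id) ∘ₗ Coalgebra.comul) :
    D ∘ₗ U - U ∘ₗ D = φ β • (LinearMap.id : B →ₗ[R] B) := by
  have L1 : ∀ t : B ⊗[R] B,
      (TensorProduct.lid R B) (TensorProduct.map φ LinearMap.id (t * (1 ⊗ₜ[R] β))) =
      (TensorProduct.lid R B) (TensorProduct.map φ LinearMap.id t) * β := by
    intro t
    induction t using TensorProduct.induction_on with
    | zero => simp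
    | tmul a b =>
      simp [Algebra.TensorProduct.tmul_mul_tmul, hφ, Bialgebra.counit_one,
        smul_mul_assoc]
    | add s t hs ht =>
      simp only [add_mul, map_add, hs, ht]
  have L2 : ∀ t : B ⊗[R] B,
      (TensorProduct.lid R B) (TensorProduct.map φ LinearMap.id (t * (β ⊗ₜ[R] 1))) =
      φ β • (TensorProduct.lid R B)
        (TensorProduct.map (Coalgebra.counit (R := R)) LinearMap.id t) := by
    intro t
    induction t using TensorProduct.induction_on with
    | zero => simp
    | tmul a b =>
      simp [Algebra.TensorProduct.tmul_mul_tmul, hφ, hεβ, smul_smul, mul_comm]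
    | add s t hs ht =>
      simp only [add_mul, map_add, hs, ht, smul_add]
  ext x
  have hcm : Coalgebra.comul (R := R) (x * β)
      = Coalgebra.comul x * (1 ⊗ₜ[R] β) + Coalgebra.comul x * (β ⊗ₜ[R] 1) := by
    rw [Bialgebra.comul_mul, hβ, mul_add]
  have hcounit : (TensorProduct.lid R B)
      (TensorProduct.map (Coalgebra.counit (R := R)) LinearMap.id (Coalgebra.comul x)) = x := by
    have := Coalgebra.rTensor_counit_comul (R := R) x
    rw [LinearMap.rTensor] at this
    rw [this]; simp
  simp only [LinearMap.sub_apply, LinearMap.comp_apply, LinearMap.smul_apply,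
    LinearMap.id_apply, hU, hD]
  simp only [LinearEquiv.coe_coe]
  rw [hcm, map_add, map_add, L1, L2, hcounit]
  abel
end
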